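/- For every finite two-person zero-sum game (payoffs satisfying H_1(s) = −H_2(s) for all aggregate strategies s), the mixed extension has a value: the maximum over mixed strategies σ_1 of player 1 of the minimum over mixed strategies σ_2 of player 2 of μH_1(σ_1, σ_2) equals the minimum over σ_2 of the maximum over σ_1 of μH_1(σ_1, σ_2). -/

import Mathlib

/-- A mixed strategy (probability distribution) on a finite type. -/
def IsMixed {α : Type*} [Fintype α] (σ : α → ℝ) : Prop :=
  (∀ a, 0 ≤ σ a) ∧ ∑ a, σ a = 1

/-- Expected payoff of player 1 in a two-person game under mixed strategies. -/
noncomputable def expPayoff2 {S1 S2 : Type*} [Fintype S1] [Fintype S2]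
    (H : S1 × S2 → ℝ) (σ1 : S1 → ℝ) (σ2 : S2 → ℝ) : ℝ :=
  ∑ s1 : S1, ∑ s2 : S2, σ1 s1 * σ2 s2 * H (s1, s2)

section Aux

variable {α : Type*} [Fintype α] [DecidableEq α]

lemma isMixed_pure (a : α) : IsMixed (fun b => if b = a then (1:ℝ) else 0) := by
  constructor
  · intro b; dsimp only; split <;> norm_num
  · simp

lemma wsum_pure (g : α → ℝ) (a : α) :
    ∑ b, (if b = a then (1:ℝ) else 0) * g b = g a := by
  simp [ite_mul]

lemma abs_wsum_le {σ : α → ℝ} (hσ : IsMixed σ) {g : α → ℝ} {C : ℝ}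
    (hg : ∀ a, |g a| ≤ C) : |∑ a, σ a * g a| ≤ C := by
  calc |∑ a, σ a * g a| ≤ ∑ a, |σ a * g a| := Finset.abs_sum_le_sum_abs _ _
    _ = ∑ a, σ a * |g a| := by
        refine Finset.sum_congr rfl fun a _ => ?_
        rw [abs_mul, abs_of_nonneg (hσ.1 a)]
    _ ≤ ∑ a, σ a * C := by
        refine Finset.sum_le_sum fun a _ => ?_
        exact mul_le_mul_of_nonneg_left (hg a) (hσ.1 a)
    _ = C := by rw [← Finset.sum_mul, hσ.2, one_mul]

lemma wsum_le_sup' [Nonempty α] {σ : α → ℝ} (hσ : IsMixed σ) (g : α → ℝ) :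
    ∑ a, σ a * g a ≤ Finset.univ.sup' Finset.univ_nonempty g := by
  calc ∑ a, σ a * g a
      ≤ ∑ a, σ a * Finset.univ.sup' Finset.univ_nonempty g := by
        refine Finset.sum_le_sum fun a _ => ?_
        exact mul_le_mul_of_nonneg_left (Finset.le_sup' g (Finset.mem_univ a)) (hσ.1 a)
    _ = _ := by rw [← Finset.sum_mul, hσ.2, one_mul]

end Aux

/-- Von Neumann's minimax theorem: every finite two-person zero-sum game has a value
in mixed strategies. -/
theorem minimax_value
    (S1 S2 : Type*) [Fintype S1] [Fintype S2] [Nonempty S1] [Nonempty S2]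
    (H1 H2 : S1 × S2 → ℝ) (hzero : ∀ s, H1 s = - H2 s) :
    (⨆ σ1 : {f : S1 → ℝ // IsMixed f}, ⨅ σ2 : {g : S2 → ℝ // IsMixed g},
        expPayoff2 H1 σ1.1 σ2.1)
      = ⨅ σ2 : {g : S2 → ℝ // IsMixed g}, ⨆ σ1 : {f : S1 → ℝ // IsMixed f},
        expPayoff2 H1 σ1.1 σ2.1 := by
  classical
  -- abbreviations
  set g : (S2 → ℝ) → S1 → ℝ := fun τ s1 => ∑ s2, τ s2 * H1 (s1, s2) with hg_def
  have hP : ∀ (σ1 : S1 → ℝ) (σ2 : S2 → ℝ),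
      expPayoff2 H1 σ1 σ2 = ∑ s1, σ1 s1 * g σ2 s1 := by
    intro σ1 σ2
    refine Finset.sum_congr rfl fun s1 _ => ?_
    rw [Finset.mul_sum]
    exact Finset.sum_congr rfl fun s2 _ => by ring
  set C : ℝ := ∑ p : S1 × S2, |H1 p| with hC_def
  have hHC : ∀ s1 s2, |H1 (s1, s2)| ≤ C := by
    intro s1 s2
    rw [hC_def]
    exact Finset.single_le_sum (fun p _ => abs_nonneg (H1 p)) (Finset.mem_univ (s1, s2))
  have hgC : ∀ (τ : S2 → ℝ), IsMixed τ → ∀ s1, |g τ s1| ≤ C := fun τ hτ s1 =>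
    abs_wsum_le hτ (hHC s1)
  have hPC : ∀ (σ1 : S1 → ℝ), IsMixed σ1 → ∀ (τ : S2 → ℝ), IsMixed τ →
      |expPayoff2 H1 σ1 τ| ≤ C := by
    intro σ1 h1 τ h2
    rw [hP]
    exact abs_wsum_le h1 (hgC τ h2)
  haveI : Nonempty {f : S1 → ℝ // IsMixed f} :=
    ⟨⟨_, isMixed_pure (Classical.arbitrary S1)⟩⟩
  haveI : Nonempty {f : S2 → ℝ // IsMixed f} :=
    ⟨⟨_, isMixed_pure (Classical.arbitrary S2)⟩⟩
  -- boundedness facts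
  have hBA : ∀ σ2 : {g : S2 → ℝ // IsMixed g},
      BddAbove (Set.range fun σ1 : {f : S1 → ℝ // IsMixed f} =>
        expPayoff2 H1 σ1.1 σ2.1) := by
    intro σ2
    refine ⟨C, ?_⟩
    rintro x ⟨σ1, rfl⟩
    exact (abs_le.1 (hPC _ σ1.2 _ σ2.2)).2
  have hBB : ∀ σ1 : {f : S1 → ℝ // IsMixed f},
      BddBelow (Set.range fun σ2 : {g : S2 → ℝ // IsMixed g} =>
        expPayoff2 H1 σ1.1 σ2.1) := by
    intro σ1
    refine ⟨-C, ?_⟩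
    rintro x ⟨σ2, rfl⟩
    exact (abs_le.1 (hPC _ σ1.2 _ σ2.2)).1
  -- the inner sup equals the maximum over pure strategies
  set maxg : {g : S2 → ℝ // IsMixed g} → ℝ :=
    fun σ2 => Finset.univ.sup' Finset.univ_nonempty (g σ2.1) with hmaxg_def
  have sup_eq : ∀ σ2 : {g : S2 → ℝ // IsMixed g},
      (⨆ σ1 : {f : S1 → ℝ // IsMixed f}, expPayoff2 H1 σ1.1 σ2.1) = maxg σ2 := by
    intro σ2
    refine le_antisymm (ciSup_le fun σ1 => ?_) ?_
    · rw [hP]; exact wsum_le_sup' σ1.2 _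
    · obtain ⟨b, -, hb⟩ := Finset.exists_mem_eq_sup' Finset.univ_nonempty (g σ2.1)
      rw [hmaxg_def]
      dsimp only
      rw [hb]
      refine le_ciSup_of_le (hBA σ2) ⟨_, isMixed_pure b⟩ ?_
      rw [hP, wsum_pure]
  set v : ℝ := ⨅ σ2 : {g : S2 → ℝ // IsMixed g}, maxg σ2 with hv_def
  have hmaxgBB : BddBelow (Set.range maxg) := by
    refine ⟨-C, ?_⟩
    rintro x ⟨σ2, rfl⟩
    refine le_trans ?_ (Finset.le_sup' (g σ2.1) (Finset.mem_univ (Classical.arbitrary S1)))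
    exact (abs_le.1 (hgC _ σ2.2 _)).1
  have hv_le : ∀ σ2 : {g : S2 → ℝ // IsMixed g}, v ≤ maxg σ2 := fun σ2 =>
    ciInf_le hmaxgBB σ2
  -- the two convex sets
  set K : Set (S1 → ℝ) := {y | ∃ τ : S2 → ℝ, IsMixed τ ∧ y = g τ} with hK_def
  set U : Set (S1 → ℝ) := ⋂ i, {y : S1 → ℝ | y i < v} with hU_def
  have hUmem : ∀ y : S1 → ℝ, y ∈ U ↔ ∀ i, y i < v := by
    intro y; simp [hU_def]
  have hUconv : Convex ℝ U :=
    convex_iInter fun i => convex_halfSpace_lt ⟨fun _ _ => rfl, fun _ _ => rfl⟩ v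
  have hUopen : IsOpen U :=
    isOpen_iInter_of_finite fun i => isOpen_lt (continuous_apply i) continuous_const
  have hKconv : Convex ℝ K := by
    rintro y1 ⟨τ1, hτ1, rfl⟩ y2 ⟨τ2, hτ2, rfl⟩ a b ha hb hab
    refine ⟨a • τ1 + b • τ2, ⟨?_, ?_⟩, ?_⟩
    · intro s2
      have := hτ1.1 s2; have := hτ2.1 s2
      simp only [Pi.add_apply, Pi.smul_apply, smul_eq_mul]
      nlinarith
    · simp only [Pi.add_apply, Pi.smul_apply, smul_eq_mul]
      rw [Finset.sum_add_distrib, ← Finset.mul_sum, ← Finset.mul_sum, hτ1.2, hτ2.2]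
      linarith
    · funext s1
      simp only [Pi.add_apply, Pi.smul_apply, smul_eq_mul, hg_def]
      rw [Finset.mul_sum, Finset.mul_sum, ← Finset.sum_add_distrib]
      exact Finset.sum_congr rfl fun s2 _ => by ring
  have hdisj : Disjoint U K := by
    rw [Set.disjoint_left]
    rintro y hyU ⟨τ, hτ, rfl⟩
    have h1 : v ≤ maxg ⟨τ, hτ⟩ := hv_le _
    obtain ⟨b, -, hb⟩ := Finset.exists_mem_eq_sup' Finset.univ_nonempty (g τ)
    have h2 : g τ b < v := (hUmem _).1 hyU b
    rw [hmaxg_def] at h1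
    dsimp only at h1
    rw [hb] at h1
    linarith
  obtain ⟨f, u, hfU, hfK⟩ := geometric_hahn_banach_open hUconv hUopen hKconv hdisj
  -- extract the coefficients of f
  set c : S1 → ℝ := fun i => f (Pi.single i 1) with hc_def
  have hf_eval : ∀ y : S1 → ℝ, f y = ∑ i, y i * c i := by
    intro y
    have hy : y = ∑ i, y i • (Pi.single i 1 : S1 → ℝ) := by
      conv_lhs => rw [← Finset.univ_sum_single y]
      exact Finset.sum_congr rfl fun i _ => by
        funext j
        simp [Pi.single_apply]
    conv_lhs => rw [hy]
    rw [map_sum]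
    exact Finset.sum_congr rfl fun i _ => by rw [map_smul]; simp [hc_def]
  set w : S1 → ℝ := fun _ => v - 1 with hw_def
  have hwU : w ∈ U := (hUmem _).2 fun i => by simp [hw_def]
  have hcnonneg : ∀ i, 0 ≤ c i := by
    intro i
    by_contra h
    push_neg at h
    set t : ℝ := max 0 ((u - f w) / (-c i)) with ht_def
    have ht0 : 0 ≤ t := le_max_left _ _
    have hw' : (w - t • (Pi.single i 1 : S1 → ℝ)) ∈ U := by
      refine (hUmem _).2 fun j => ?_
      have hsingle : (0:ℝ) ≤ (Pi.single i 1 : S1 → ℝ) j := by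
        rw [Pi.single_apply]; split <;> norm_num
      have : (w - t • (Pi.single i 1 : S1 → ℝ)) j = w j - t * (Pi.single i 1 : S1 → ℝ) j := by
        simp
      rw [this]
      have : w j < v := by simp [hw_def]
      nlinarith
    have hlt : f (w - t • (Pi.single i 1 : S1 → ℝ)) < u := hfU _ hw'
    have heq : f (w - t • (Pi.single i 1 : S1 → ℝ)) = f w - t * c i := by
      rw [map_sub, map_smul]; simp [hc_def]
    have h1 : (u - f w) / (-c i) ≤ t := le_max_right _ _
    rw [div_le_iff₀ (by linarith : (0:ℝ) < -c i)] at h1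
    rw [heq] at hlt
    nlinarith
  set Sc : ℝ := ∑ i, c i with hSc_def
  have hScnonneg : 0 ≤ Sc := Finset.sum_nonneg fun i _ => hcnonneg i
  have hfw : f w = (v - 1) * Sc := by
    rw [hf_eval, hSc_def, Finset.mul_sum]
  have hScpos : 0 < Sc := by
    rcases lt_or_eq_of_le hScnonneg with h | h
    · exact h
    · exfalso
      have hcall : ∀ i ∈ Finset.univ, c i = 0 := by
        rw [← Finset.sum_eq_zero_iff_of_nonneg (fun i _ => hcnonneg i)]
        exact h.symm
      have hfzero : ∀ y : S1 → ℝ, f y = 0 := by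
        intro y
        rw [hf_eval]
        exact Finset.sum_eq_zero fun i _ => by rw [hcall i (Finset.mem_univ i)]; ring
      have h1 : f w < u := hfU w hwU
      have h2 : u ≤ f (g (fun b => if b = Classical.arbitrary S2 then 1 else 0)) :=
        hfK _ ⟨_, isMixed_pure _, rfl⟩
      rw [hfzero] at h1
      rw [hfzero] at h2
      linarith
  have hu_ge : v * Sc ≤ u := by
    by_contra h
    push_neg at h
    set ε : ℝ := (v * Sc - u) / (2 * Sc) with hε_def
    have hεpos : 0 < ε := div_pos (by linarith) (by linarith)
    have hmem : (fun _ : S1 => v - ε) ∈ U := (hUmem _).2 fun i => by simp; linarith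
    have hlt : f (fun _ : S1 => v - ε) < u := hfU _ hmem
    have heq : f (fun _ : S1 => v - ε) = (v - ε) * Sc := by
      rw [hf_eval, hSc_def, Finset.mul_sum]
    rw [heq, hε_def] at hlt
    have : (v - (v * Sc - u) / (2 * Sc)) * Sc = v * Sc - (v * Sc - u) / 2 := by
      field_simp
    rw [this] at hlt
    linarith
  -- the optimal strategy for player 1
  set σs : S1 → ℝ := fun i => c i / Sc with hσs_def
  have hσsmix : IsMixed σs := by
    constructor
    · intro i; exact div_nonneg (hcnonneg i) hScnonneg
    · rw [hσs_def]
      dsimp only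
      rw [← Finset.sum_div, ← hSc_def, div_self (ne_of_gt hScpos)]
  have key : ∀ τ : {g : S2 → ℝ // IsMixed g}, v ≤ expPayoff2 H1 σs τ.1 := by
    intro τ
    have hu : u ≤ f (g τ.1) := hfK _ ⟨τ.1, τ.2, rfl⟩
    rw [hf_eval] at hu
    have heq : expPayoff2 H1 σs τ.1 = (∑ i, g τ.1 i * c i) / Sc := by
      rw [hP, Finset.sum_div]
      exact Finset.sum_congr rfl fun i _ => by rw [hσs_def]; ring
    rw [heq, le_div_iff₀ hScpos]
    linarith
  -- assembling
  have hRHS : (⨅ σ2 : {g : S2 → ℝ // IsMixed g}, ⨆ σ1 : {f : S1 → ℝ // IsMixed f},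
      expPayoff2 H1 σ1.1 σ2.1) = v := by
    rw [hv_def]
    exact iInf_congr sup_eq
  rw [hRHS]
  have hBA2 : BddAbove (Set.range fun σ1 : {f : S1 → ℝ // IsMixed f} =>
      ⨅ σ2 : {g : S2 → ℝ // IsMixed g}, expPayoff2 H1 σ1.1 σ2.1) := by
    refine ⟨C, ?_⟩
    rintro x ⟨σ1, rfl⟩
    obtain ⟨τ0⟩ : Nonempty {g : S2 → ℝ // IsMixed g} := inferInstance
    refine le_trans (ciInf_le (hBB σ1) τ0) ?_
    exact (abs_le.1 (hPC _ σ1.2 _ τ0.2)).2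
  refine le_antisymm ?_ ?_
  · rw [hv_def]
    refine le_ciInf fun σ2 => ?_
    refine ciSup_le fun σ1 => ?_
    refine le_trans (ciInf_le (hBB σ1) σ2) ?_
    rw [← sup_eq σ2]
    exact le_ciSup (hBA σ2) σ1
  · refine le_trans (le_ciInf fun τ => key τ) ?_
    exact le_ciSup hBA2 ⟨σs, hσsmix⟩
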